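/- For a strictly positive n×n matrix A: (1/n)·∑ᵢ∑ⱼ a_{i,j} = max over B ∈ Ω(A) of ρ(B) holds if and only if either the all-ones vector is a Perron eigenvector of A (all row sums equal), or every row of A is constant. -/
import Mathlib


open Matrix Finset

/-- The Perron root: the largest nonnegative real eigenvalue of a matrix. -/
noncomputable def perronRoot {n : ℕ} (A : Matrix (Fin n) (Fin n) ℝ) : ℝ :=
  sSup {r : ℝ | 0 ≤ r ∧ ∃ v : Fin n → ℝ, v ≠ 0 ∧ A.mulVec v = r • v}

/-- Ω(A): matrices obtained by permuting the entries within each row of A independently. -/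
def Omega {n : ℕ} (A : Matrix (Fin n) (Fin n) ℝ) : Set (Matrix (Fin n) (Fin n) ℝ) :=
  {B | ∀ i, ∃ φ : Equiv.Perm (Fin n), ∀ j, B i j = A i (φ j)}

/-- Irreducibility: the directed graph of the matrix is strongly connected. -/
def Irred {n : ℕ} (A : Matrix (Fin n) (Fin n) ℝ) : Prop :=
  ∀ i j, ∃ m : ℕ, 0 < m ∧ 0 < (A ^ m) i j

/-! ### Auxiliary lemmas -/

lemma aux_eig_le {n : ℕ} (B : Matrix (Fin n) (Fin n) ℝ) (hB : ∀ i j, 0 ≤ B i j) {K s : ℝ}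
    (hK : ∀ i, ∑ j, B i j ≤ K) (hs : 0 ≤ s) {v : Fin n → ℝ} (hv : v ≠ 0)
    (he : B.mulVec v = s • v) : s ≤ K := by
  obtain ⟨i0, hi0⟩ := Function.ne_iff.mp hv
  obtain ⟨i, -, hi⟩ := Finset.exists_max_image Finset.univ (fun i => |v i|) ⟨i0, Finset.mem_univ i0⟩
  have hvi : 0 < |v i| := lt_of_lt_of_le (abs_pos.mpr hi0) (hi i0 (Finset.mem_univ i0))
  have h1 : s * |v i| ≤ K * |v i| := by
    calc s * |v i| = |s * v i| := by rw [abs_mul, abs_of_nonneg hs]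
    _ = |(B.mulVec v) i| := by rw [he]; rfl
    _ = |∑ j, B i j * v j| := by simp [Matrix.mulVec, dotProduct]
    _ ≤ ∑ j, |B i j * v j| := Finset.abs_sum_le_sum_abs _ _
    _ = ∑ j, B i j * |v j| := by
        refine Finset.sum_congr rfl fun j _ => ?_
        rw [abs_mul, abs_of_nonneg (hB i j)]
    _ ≤ ∑ j, B i j * |v i| := by
        refine Finset.sum_le_sum fun j _ => ?_
        exact mul_le_mul_of_nonneg_left (hi j (Finset.mem_univ j)) (hB i j)
    _ = (∑ j, B i j) * |v i| := by rw [Finset.sum_mul]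
    _ ≤ K * |v i| := mul_le_mul_of_nonneg_right (hK i) (le_of_lt hvi)
  exact le_of_mul_le_mul_right h1 hvi

lemma aux_perron_le {n : ℕ} (B : Matrix (Fin n) (Fin n) ℝ) (hB : ∀ i j, 0 ≤ B i j) {K : ℝ}
    (hK : ∀ i, ∑ j, B i j ≤ K) (hK0 : 0 ≤ K) : perronRoot B ≤ K := by
  refine Real.sSup_le (fun x hx => ?_) hK0
  obtain ⟨hx0, v, hv, he⟩ := hx
  exact aux_eig_le B hB hK hx0 hv he

lemma aux_le_perron {n : ℕ} (B : Matrix (Fin n) (Fin n) ℝ) (hB : ∀ i j, 0 ≤ B i j) {K s : ℝ}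
    (hK : ∀ i, ∑ j, B i j ≤ K) (hs : 0 ≤ s) {v : Fin n → ℝ} (hv : v ≠ 0)
    (he : B.mulVec v = s • v) : s ≤ perronRoot B := by
  refine le_csSup ⟨K, fun x hx => ?_⟩ ⟨hs, v, hv, he⟩
  obtain ⟨hx0, w, hw, hew⟩ := hx
  exact aux_eig_le B hB hK hx0 hw hew

lemma aux_ones_ne_zero {n : ℕ} (hn : 0 < n) : (fun _ : Fin n => (1 : ℝ)) ≠ 0 :=
  Function.ne_iff.mpr ⟨⟨0, hn⟩, one_ne_zero⟩

lemma aux_perron_rowsum {n : ℕ} (hn : 0 < n) (B : Matrix (Fin n) (Fin n) ℝ)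
    (hB : ∀ i j, 0 < B i j) {r : ℝ} (h : ∀ i, ∑ j, B i j = r) : perronRoot B = r := by
  haveI : Nonempty (Fin n) := ⟨⟨0, hn⟩⟩
  have hrpos : 0 < r := by
    rw [← h ⟨0, hn⟩]
    exact Finset.sum_pos (fun j _ => hB _ j) univ_nonempty
  have hone : B.mulVec (fun _ => 1) = r • (fun _ => (1 : ℝ)) := by
    funext i
    show ∑ j, B i j * 1 = r * 1
    simp [h i]
  refine le_antisymm ?_ ?_
  · exact aux_perron_le B (fun i j => le_of_lt (hB i j)) (fun i => le_of_eq (h i)) (le_of_lt hrpos)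
  · exact aux_le_perron B (fun i j => le_of_lt (hB i j)) (fun i => le_of_eq (h i))
      (le_of_lt hrpos) (aux_ones_ne_zero hn) hone

lemma aux_cheb_id {n : ℕ} (f g : Fin n → ℝ) :
    ∑ j, ∑ k, (f j - f k) * (g j - g k) =
      2 * ((n : ℝ) * ∑ j, f j * g j) - 2 * ((∑ j, f j) * (∑ j, g j)) := by
  have h : ∀ j k : Fin n, (f j - f k) * (g j - g k)
      = f j * g j + f k * g k - f j * g k - f k * g j := by intros; ring
  simp_rw [h, Finset.sum_sub_distrib, Finset.sum_add_distrib, Finset.sum_const,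
    Finset.card_univ, Fintype.card_fin, ← Finset.sum_mul, ← Finset.mul_sum]
  simp only [nsmul_eq_mul, ← Finset.mul_sum, Finset.sum_const, Finset.card_univ,
    Fintype.card_fin]
  ring_nf
  rw [← Finset.sum_mul]
  ring

lemma aux_cheb {n : ℕ} (f g : Fin n → ℝ) (h : ∀ j k, 0 ≤ (f j - f k) * (g j - g k)) :
    (∑ j, f j) * (∑ j, g j) ≤ (n : ℝ) * ∑ j, f j * g j := by
  have hid := aux_cheb_id f g
  have hpos : (0:ℝ) ≤ ∑ j, ∑ k, (f j - f k) * (g j - g k) :=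
    Finset.sum_nonneg fun j _ => Finset.sum_nonneg fun k _ => h j k
  linarith

lemma aux_cheb_strict {n : ℕ} (f g : Fin n → ℝ) (h : ∀ j k, 0 ≤ (f j - f k) * (g j - g k))
    (hw : ∃ j k, 0 < (f j - f k) * (g j - g k)) :
    (∑ j, f j) * (∑ j, g j) < (n : ℝ) * ∑ j, f j * g j := by
  have hid := aux_cheb_id f g
  obtain ⟨j0, k0, hjk⟩ := hw
  have hpos : (0:ℝ) < ∑ j, ∑ k, (f j - f k) * (g j - g k) := by
    refine Finset.sum_pos' (fun j _ => Finset.sum_nonneg fun k _ => h j k)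
      ⟨j0, Finset.mem_univ j0, ?_⟩
    exact Finset.sum_pos' (fun k _ => h j0 k) ⟨k0, Finset.mem_univ k0, hjk⟩
  linarith

lemma aux_perron_exists {n : ℕ} (hn : 0 < n) (C : Matrix (Fin n) (Fin n) ℝ)
    (hC : ∀ i j, 0 < C i j) :
    ∃ r : ℝ, 0 < r ∧ ∃ u : Fin n → ℝ, (∀ i, 0 < u i) ∧ C.mulVec u = r • u := by
  haveI : Nonempty (Fin n) := ⟨⟨0, hn⟩⟩
  set St : ℝ := ∑ i, ∑ j, C i j with hSt
  have hStpos : 0 < St :=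
    Finset.sum_pos (fun i _ => Finset.sum_pos (fun j _ => hC i j) univ_nonempty) univ_nonempty
  set S : Set (ℝ × (Fin n → ℝ)) :=
    {p | 0 ≤ p.1 ∧ (∀ i, 0 ≤ p.2 i) ∧ (∑ i, p.2 i) = 1 ∧
      ∀ i, p.1 * p.2 i ≤ ∑ j, C i j * p.2 j} with hS
  have hbound : ∀ p ∈ S, p.1 ≤ n * St := by
    rintro ⟨t, x⟩ ⟨ht0, hx0, hx1, hxle⟩
    obtain ⟨i, hi⟩ : ∃ i, (n : ℝ)⁻¹ ≤ x i := by
      by_contra h'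
      push_neg at h'
      have : (∑ i, x i) < ∑ _i : Fin n, (n : ℝ)⁻¹ :=
        Finset.sum_lt_sum_of_nonempty univ_nonempty fun i _ => h' i
      rw [hx1, Finset.sum_const, Finset.card_univ, Fintype.card_fin, nsmul_eq_mul] at this
      rw [mul_inv_cancel₀ (by positivity : (n:ℝ) ≠ 0)] at this
      exact lt_irrefl _ this
    have h1 : t * (n:ℝ)⁻¹ ≤ St := by
      calc t * (n:ℝ)⁻¹ ≤ t * x i := mul_le_mul_of_nonneg_left hi ht0
        _ ≤ ∑ j, C i j * x j := hxle i
        _ ≤ ∑ j, C i j * 1 := by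
            refine Finset.sum_le_sum fun j _ => ?_
            refine mul_le_mul_of_nonneg_left ?_ (le_of_lt (hC i j))
            calc x j ≤ ∑ k, x k :=
                Finset.single_le_sum (fun k _ => hx0 k) (Finset.mem_univ j)
              _ = 1 := hx1
        _ = ∑ j, C i j := by simp
        _ ≤ St := Finset.single_le_sum
              (fun i _ => Finset.sum_nonneg fun j _ => le_of_lt (hC i j)) (Finset.mem_univ i)
    have hn' : (0:ℝ) < n := by positivity
    rw [show t * (n:ℝ)⁻¹ = t / n by ring, div_le_iff₀ hn'] at h1
    calc t ≤ St * n := h1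
      _ = n * St := by ring
  have hclosed : IsClosed S := by
    have hrw : S = ({p : ℝ × (Fin n → ℝ) | 0 ≤ p.1} ∩ ((⋂ i, {p | 0 ≤ p.2 i}) ∩
        ({p : ℝ × (Fin n → ℝ) | (∑ i, p.2 i) = 1} ∩
          ⋂ i, {p : ℝ × (Fin n → ℝ) | p.1 * p.2 i ≤ ∑ j, C i j * p.2 j}))) := by
      ext p
      simp only [hS, Set.mem_setOf_eq, Set.mem_inter_iff, Set.mem_iInter]
    rw [hrw]
    refine (isClosed_le continuous_const continuous_fst).inter
      (IsClosed.inter ?_ (IsClosed.inter ?_ ?_))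
    · exact isClosed_iInter fun i =>
        isClosed_le continuous_const ((continuous_apply i).comp continuous_snd)
    · exact isClosed_eq (continuous_finset_sum _ fun i _ =>
        (continuous_apply i).comp continuous_snd) continuous_const
    · exact isClosed_iInter fun i =>
        isClosed_le (continuous_fst.mul ((continuous_apply i).comp continuous_snd))
          (continuous_finset_sum _ fun j _ =>
            continuous_const.mul ((continuous_apply j).comp continuous_snd))
  have hbdd : Bornology.IsBounded S := by
    rw [isBounded_iff_forall_norm_le]
    refine ⟨max (n * St) 1, fun p hp => ?_⟩
    obtain ⟨hp0, hp1, hp2, -⟩ := id hp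
    rw [Prod.norm_def]
    refine max_le_max ?_ ?_
    · rw [Real.norm_eq_abs, abs_of_nonneg hp0]
      exact hbound p hp
    · refine (pi_norm_le_iff_of_nonneg zero_le_one).mpr fun i => ?_
      rw [Real.norm_eq_abs, abs_of_nonneg (hp1 i)]
      calc p.2 i ≤ ∑ k, p.2 k := Finset.single_le_sum (fun k _ => hp1 k) (Finset.mem_univ i)
        _ = 1 := hp2
  have hcompact : IsCompact S := Metric.isCompact_of_isClosed_isBounded hclosed hbdd
  set t1 : ℝ := Finset.univ.inf' univ_nonempty (fun i => ∑ j, C i j) with ht1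
  have ht1pos : 0 < t1 := by
    rw [ht1, Finset.lt_inf'_iff]
    exact fun i _ => Finset.sum_pos (fun j _ => hC i j) univ_nonempty
  have hp0 : ((t1, fun _ => (n:ℝ)⁻¹) : ℝ × (Fin n → ℝ)) ∈ S := by
    refine ⟨le_of_lt ht1pos, fun i => by positivity, ?_, fun i => ?_⟩
    · simp [Finset.sum_const, Finset.card_univ]
      rw [mul_inv_cancel₀ (by positivity : (n:ℝ) ≠ 0)]
    · have : t1 ≤ ∑ j, C i j := Finset.inf'_le _ (Finset.mem_univ i)
      calc t1 * (n:ℝ)⁻¹ ≤ (∑ j, C i j) * (n:ℝ)⁻¹ :=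
            mul_le_mul_of_nonneg_right this (by positivity)
        _ = ∑ j, C i j * (n:ℝ)⁻¹ := by rw [Finset.sum_mul]
  obtain ⟨⟨r, v⟩, hmemS, hmax⟩ :=
    hcompact.exists_isMaxOn ⟨_, hp0⟩ continuous_fst.continuousOn
  have hmax' : ∀ q ∈ S, q.1 ≤ r := fun q hq => hmax hq
  have hr : t1 ≤ r := hmax' _ hp0
  have rpos : 0 < r := lt_of_lt_of_le ht1pos hr
  obtain ⟨-, hv0, hv1, hvle⟩ := hmemS
  set z : Fin n → ℝ := fun i => ∑ j, C i j * v j with hz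
  have hzpos : ∀ i, 0 < z i := by
    obtain ⟨j0, hj0⟩ : ∃ j0, 0 < v j0 := by
      by_contra h'
      push_neg at h'
      have : ∀ j, v j = 0 := fun j => le_antisymm (h' j) (hv0 j)
      simp [this] at hv1
    intro i
    calc (0:ℝ) < C i j0 * v j0 := mul_pos (hC i j0) hj0
      _ ≤ ∑ j, C i j * v j := Finset.single_le_sum
          (fun j _ => mul_nonneg (le_of_lt (hC i j)) (hv0 j)) (Finset.mem_univ j0)
  have heq : ∀ i, r * v i = z i := by
    by_contra h'
    push_neg at h'
    obtain ⟨i0, hi0⟩ := h'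
    have hlt : r * v i0 < z i0 := lt_of_le_of_ne (hvle i0) hi0
    set d : Fin n → ℝ := fun j => z j - r * v j with hd
    have hd0 : ∀ j, 0 ≤ d j := fun j => sub_nonneg.mpr (hvle j)
    have hdi0 : 0 < d i0 := sub_pos.mpr hlt
    have hstep : ∀ k, 0 < ∑ j, C k j * d j := fun k =>
      Finset.sum_pos' (fun j _ => mul_nonneg (le_of_lt (hC k j)) (hd0 j))
        ⟨i0, Finset.mem_univ i0, mul_pos (hC k i0) hdi0⟩
    have hCz : ∀ k, r * z k < ∑ j, C k j * z j := by
      intro k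
      have hexp : ∑ j, C k j * d j = (∑ j, C k j * z j) - r * z k := by
        simp only [hd, hz, mul_sub, Finset.sum_sub_distrib]
        congr 1
        rw [Finset.mul_sum]
        refine Finset.sum_congr rfl fun j _ => by ring
      have := hstep k
      rw [hexp] at this
      linarith
    set ε : ℝ := Finset.univ.inf' univ_nonempty
      (fun k => ((∑ j, C k j * z j) - r * z k) / z k) with hε
    have hεpos : 0 < ε := by
      rw [hε, Finset.lt_inf'_iff]
      intro k _
      exact div_pos (by linarith [hCz k]) (hzpos k)
    have hεk : ∀ k, (r + ε) * z k ≤ ∑ j, C k j * z j := by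
      intro k
      have h1 : ε ≤ ((∑ j, C k j * z j) - r * z k) / z k :=
        Finset.inf'_le _ (Finset.mem_univ k)
      rw [le_div_iff₀ (hzpos k)] at h1
      linarith
    set s : ℝ := ∑ k, z k with hs
    have hspos : 0 < s := Finset.sum_pos (fun k _ => hzpos k) univ_nonempty
    have hmem2 : ((r + ε, fun k => z k / s) : ℝ × (Fin n → ℝ)) ∈ S := by
      refine ⟨by positivity, fun k => le_of_lt (div_pos (hzpos k) hspos), ?_, fun k => ?_⟩
      · rw [← Finset.sum_div, ← hs, div_self (ne_of_gt hspos)]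
      · rw [show (r + ε) * (z k / s) = ((r + ε) * z k) / s by ring,
          show (∑ j, C k j * (z j / s)) = (∑ j, C k j * z j) / s by
            rw [Finset.sum_div]; exact Finset.sum_congr rfl fun j _ => by ring]
        gcongr
        exact hεk k
    have h3 : r + ε ≤ r := hmax' _ hmem2
    linarith
  refine ⟨r, rpos, v, fun i => ?_, ?_⟩
  · have h0 : 0 < r * v i := by rw [heq i]; exact hzpos i
    nlinarith
  · funext i
    show (C.mulVec v) i = r * v i
    rw [heq i]
    simp [Matrix.mulVec, dotProduct, hz]

lemma aux_transpose_eig {n : ℕ} (B : Matrix (Fin n) (Fin n) ℝ) (r : ℝ) (u : Fin n → ℝ)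
    (hu : u ≠ 0) (h : Bᵀ.mulVec u = r • u) :
    ∃ v : Fin n → ℝ, v ≠ 0 ∧ B.mulVec v = r • v := by
  have h1 : (Bᵀ - r • 1).mulVec u = 0 := by
    rw [Matrix.sub_mulVec, Matrix.smul_mulVec, Matrix.one_mulVec, h, sub_self]
  have hdet : (Bᵀ - r • 1).det = 0 :=
    (Matrix.exists_mulVec_eq_zero_iff).mp ⟨u, hu, h1⟩
  have hdet2 : (B - r • 1).det = 0 := by
    rw [← Matrix.det_transpose, Matrix.transpose_sub, Matrix.transpose_smul,
      Matrix.transpose_one]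
    exact hdet
  obtain ⟨v, hv, hv2⟩ := (Matrix.exists_mulVec_eq_zero_iff).mpr hdet2
  refine ⟨v, hv, ?_⟩
  rw [Matrix.sub_mulVec, Matrix.smul_mulVec, Matrix.one_mulVec, sub_eq_zero] at hv2
  exact hv2

lemma aux_mono_lt {n : ℕ} (hn : 0 < n) (f : Fin n → ℝ) (hf : Monotone f)
    (hnc : ∃ a b, f a ≠ f b) : f ⟨0, hn⟩ < f ⟨n - 1, by omega⟩ := by
  have h0 : ∀ c : Fin n, (⟨0, hn⟩ : Fin n) ≤ c := fun c => by simp [Fin.le_def]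
  have h1 : ∀ c : Fin n, c ≤ (⟨n - 1, by omega⟩ : Fin n) := fun c => by
    have := c.isLt; simp [Fin.le_def]; omega
  obtain ⟨a, b, hab⟩ := hnc
  rcases lt_or_gt_of_ne hab with h | h
  · exact lt_of_le_of_lt (hf (h0 a)) (lt_of_lt_of_le h (hf (h1 b)))
  · exact lt_of_le_of_lt (hf (h0 b)) (lt_of_lt_of_le h (hf (h1 a)))

lemma aux_construct {n : ℕ} (hn : 0 < n) (A : Matrix (Fin n) (Fin n) ℝ)
    (i0 : Fin n) (hrow : ∃ j j', A i0 j ≠ A i0 j')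
    (hws : ∃ a b : Fin n, (∑ j, A a j) ≠ (∑ j, A b j)) :
    ∃ B ∈ Omega A,
      (∀ i, (∑ j, A i j) * (∑ k, ∑ j, A k j) ≤ (n:ℝ) * ∑ j, B i j * (∑ k, A j k)) ∧
      (∑ j, A i0 j) * (∑ k, ∑ j, A k j) < (n:ℝ) * ∑ j, B i0 j * (∑ k, A j k) := by
  set w : Fin n → ℝ := fun i => ∑ j, A i j with hwdef
  set σ : Equiv.Perm (Fin n) := Tuple.sort w with hσ
  set π : Fin n → Equiv.Perm (Fin n) := fun i => Tuple.sort (A i) with hπ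
  set B : Matrix (Fin n) (Fin n) ℝ := Matrix.of fun i j => A i ((π i) (σ.symm j)) with hB
  have hBmem : B ∈ Omega A := fun i => ⟨σ.symm.trans (π i), fun j => rfl⟩
  have hBσ : ∀ i p, B i (σ p) = A i ((π i) p) := by
    intro i p
    show A i ((π i) (σ.symm (σ p))) = A i ((π i) p)
    rw [Equiv.symm_apply_apply]
  have hBmono : ∀ i, Monotone (fun p => B i (σ p)) := by
    intro i
    have := Tuple.monotone_sort (A i)
    intro p q hpq
    simp only [hBσ]
    exact this hpq
  have hwmono : Monotone (fun p => w (σ p)) := Tuple.monotone_sort w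
  have hmv : ∀ i j k, 0 ≤ (B i j - B i k) * (w j - w k) := by
    intro i j k
    have hj : j = σ (σ.symm j) := (Equiv.apply_symm_apply σ j).symm
    have hk : k = σ (σ.symm k) := (Equiv.apply_symm_apply σ k).symm
    rcases le_total (σ.symm j) (σ.symm k) with h | h
    · have h1 : B i j ≤ B i k := by rw [hj, hk]; exact hBmono i h
      have h2 : w j ≤ w k := by rw [hj, hk]; exact hwmono h
      nlinarith
    · have h1 : B i k ≤ B i j := by rw [hj, hk]; exact hBmono i h
      have h2 : w k ≤ w j := by rw [hj, hk]; exact hwmono h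
      exact mul_nonneg (by linarith) (by linarith)
  have hrowsum : ∀ i, ∑ j, B i j = w i := by
    intro i
    show ∑ j, A i ((σ.symm.trans (π i)) j) = ∑ j, A i j
    exact Equiv.sum_comp _ (A i)
  refine ⟨B, hBmem, fun i => ?_, ?_⟩
  · have := aux_cheb (fun j => B i j) w (hmv i)
    rw [hrowsum i] at this
    exact this
  · set p0 : Fin n := ⟨0, hn⟩
    set p1 : Fin n := ⟨n - 1, by omega⟩
    have hBnc : ∃ a b, (fun p => B i0 (σ p)) a ≠ (fun p => B i0 (σ p)) b := by
      obtain ⟨j, j', hjj⟩ := hrow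
      refine ⟨(π i0).symm j, (π i0).symm j', ?_⟩
      simp only [hBσ, Equiv.apply_symm_apply]
      exact hjj
    have hwnc : ∃ a b, (fun p => w (σ p)) a ≠ (fun p => w (σ p)) b := by
      obtain ⟨a, b, hab⟩ := hws
      exact ⟨σ.symm a, σ.symm b, by simpa [Equiv.apply_symm_apply] using hab⟩
    have hB01 : B i0 (σ p0) < B i0 (σ p1) := aux_mono_lt hn _ (hBmono i0) hBnc
    have hw01 : w (σ p0) < w (σ p1) := aux_mono_lt hn _ hwmono hwnc
    have := aux_cheb_strict (fun j => B i0 j) w (hmv i0)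
      ⟨σ p1, σ p0, mul_pos (by linarith) (by linarith)⟩
    rw [hrowsum i0] at this
    exact this

theorem stmt12 {n : ℕ} (hn : 0 < n) (A : Matrix (Fin n) (Fin n) ℝ)
    (hA : ∀ i j, 0 < A i j) :
    (∑ i, ∑ j, A i j) / n = sSup (perronRoot '' Omega A) ↔
      (A.mulVec (fun _ => 1) = perronRoot A • (fun _ => (1 : ℝ))) ∨
        (∀ i, ∃ c, ∀ j, A i j = c) := by
  haveI : Nonempty (Fin n) := ⟨⟨0, hn⟩⟩
  have hn' : (0:ℝ) < n := by positivity
  set w : Fin n → ℝ := fun i => ∑ j, A i j with hwdef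
  set T : ℝ := ∑ i, ∑ j, A i j with hTdef
  have hwpos : ∀ i, 0 < w i := fun i => Finset.sum_pos (fun j _ => hA i j) univ_nonempty
  have hTpos : 0 < T := Finset.sum_pos (fun i _ => hwpos i) univ_nonempty
  have hwT : ∀ i, w i ≤ T := fun i =>
    Finset.single_le_sum (fun k _ => le_of_lt (hwpos k)) (Finset.mem_univ i)
  have hOmegaPos : ∀ B ∈ Omega A, ∀ i j, 0 < B i j := by
    intro B hB i j
    obtain ⟨φ, hφ⟩ := hB i
    rw [hφ j]
    exact hA i _
  have hOmegaRS : ∀ B ∈ Omega A, ∀ i, ∑ j, B i j = w i := by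
    intro B hB i
    obtain ⟨φ, hφ⟩ := hB i
    calc ∑ j, B i j = ∑ j, A i (φ j) := Finset.sum_congr rfl fun j _ => hφ j
      _ = ∑ j, A i j := Equiv.sum_comp φ (A i)
  have hAmem : A ∈ Omega A := fun i => ⟨Equiv.refl _, fun j => rfl⟩
  have hPle : ∀ B ∈ Omega A, perronRoot B ≤ T := fun B hB =>
    aux_perron_le B (fun i j => le_of_lt (hOmegaPos B hB i j))
      (fun i => (hOmegaRS B hB i).le.trans (hwT i)) (le_of_lt hTpos)
  have hbdd : BddAbove (perronRoot '' Omega A) := by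
    refine ⟨T, fun x hx => ?_⟩
    obtain ⟨B, hB, rfl⟩ := hx
    exact hPle B hB
  constructor
  · -- forward direction, by contraposition
    intro heq
    by_contra hcon
    push_neg at hcon
    obtain ⟨hc1, hc2⟩ := hcon
    have hws : ∃ a b : Fin n, (∑ j, A a j) ≠ (∑ j, A b j) := by
      by_contra h'
      push_neg at h'
      apply hc1
      have hr : ∀ i, ∑ j, A i j = w ⟨0, hn⟩ := fun i => h' i ⟨0, hn⟩
      have hPA : perronRoot A = w ⟨0, hn⟩ := aux_perron_rowsum hn A hA hr
      funext i
      show ∑ j, A i j * 1 = perronRoot A * 1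
      simp only [mul_one]
      rw [hPA, hr i]
    obtain ⟨i0, hi0⟩ : ∃ i0 : Fin n, ∃ j j', A i0 j ≠ A i0 j' := by
      obtain ⟨i, hi⟩ := hc2
      obtain ⟨j, hj⟩ := hi (A i ⟨0, hn⟩)
      exact ⟨i, j, ⟨0, hn⟩, hj⟩
    obtain ⟨B, hBmem, hle, hlt⟩ := aux_construct hn A i0 hi0 hws
    have hBpos := hOmegaPos B hBmem
    obtain ⟨r, hrpos, u, hupos, hueq⟩ := aux_perron_exists hn Bᵀ (fun i j => hBpos j i)
    -- derive T / n < r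
    have hBw : ∀ i, (T / n) * w i ≤ ∑ j, B i j * w j := by
      intro i
      have := hle i
      rw [div_mul_eq_mul_div, div_le_iff₀ hn']
      calc T * w i = w i * T := by ring
        _ ≤ (n:ℝ) * ∑ j, B i j * w j := this
        _ = (∑ j, B i j * w j) * n := by ring
    have hBwi0 : (T / n) * w i0 < ∑ j, B i0 j * w j := by
      rw [div_mul_eq_mul_div, div_lt_iff₀ hn']
      calc T * w i0 = w i0 * T := by ring
        _ < (n:ℝ) * ∑ j, B i0 j * w j := hlt
        _ = (∑ j, B i0 j * w j) * n := by ring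
    have hS : 0 < ∑ i, u i * w i :=
      Finset.sum_pos (fun i _ => mul_pos (hupos i) (hwpos i)) univ_nonempty
    have hkey1 : r * (∑ i, u i * w i) = ∑ i, u i * (∑ j, B i j * w j) := by
      have huk : ∀ k, ∑ i, B i k * u i = r * u k := by
        intro k
        have := congrFun hueq k
        simpa [Matrix.mulVec, dotProduct, Matrix.transpose_apply,
          mul_comm] using this
      calc r * (∑ i, u i * w i) = ∑ k, (r * u k) * w k := by
            rw [Finset.mul_sum]; exact Finset.sum_congr rfl fun k _ => by ring
        _ = ∑ k, (∑ i, B i k * u i) * w k := by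
            exact Finset.sum_congr rfl fun k _ => by rw [huk k]
        _ = ∑ k, ∑ i, B i k * u i * w k := by
            exact Finset.sum_congr rfl fun k _ => by rw [Finset.sum_mul]
        _ = ∑ i, ∑ k, B i k * u i * w k := Finset.sum_comm
        _ = ∑ i, u i * (∑ j, B i j * w j) := by
            refine Finset.sum_congr rfl fun i _ => ?_
            rw [Finset.mul_sum]
            exact Finset.sum_congr rfl fun k _ => by ring
    have hkey2 : (T / n) * (∑ i, u i * w i) < ∑ i, u i * (∑ j, B i j * w j) := by
      calc (T / n) * (∑ i, u i * w i) = ∑ i, u i * ((T / n) * w i) := by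
            rw [Finset.mul_sum]; exact Finset.sum_congr rfl fun i _ => by ring
        _ < ∑ i, u i * (∑ j, B i j * w j) := by
            refine Finset.sum_lt_sum (fun i _ =>
              mul_le_mul_of_nonneg_left (hBw i) (le_of_lt (hupos i)))
              ⟨i0, Finset.mem_univ i0, ?_⟩
            exact mul_lt_mul_of_pos_left hBwi0 (hupos i0)
    have hTnr : T / n < r := by
      have := hkey2
      rw [← hkey1] at this
      exact lt_of_mul_lt_mul_right (by linarith [mul_comm r (∑ i, u i * w i)]) (le_of_lt hS)
    -- r is an eigenvalue of B
    have hune : u ≠ 0 := by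
      intro h0
      have := hupos ⟨0, hn⟩
      rw [h0] at this
      exact lt_irrefl 0 this
    obtain ⟨v, hv, hveq⟩ := aux_transpose_eig B r u hune hueq
    have hrP : r ≤ perronRoot B :=
      aux_le_perron B (fun i j => le_of_lt (hBpos i j))
        (fun i => (hOmegaRS B hBmem i).le.trans (hwT i)) (le_of_lt hrpos) hv hveq
    have hPs : perronRoot B ≤ sSup (perronRoot '' Omega A) :=
      le_csSup hbdd ⟨B, hBmem, rfl⟩
    rw [heq] at *
    linarith
  · rintro (h1 | h2)
    · -- all row sums equal the Perron root
      have hr : ∀ i, ∑ j, A i j = perronRoot A := by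
        intro i
        have := congrFun h1 i
        simpa [Matrix.mulVec, dotProduct] using this
      have hPB : ∀ B ∈ Omega A, perronRoot B = perronRoot A := by
        intro B hB
        exact aux_perron_rowsum hn B (hOmegaPos B hB)
          (fun i => (hOmegaRS B hB i).trans (hr i))
      have hPApos : 0 < perronRoot A := by
        rw [← hr ⟨0, hn⟩]; exact hwpos _
      have hLHS : T / n = perronRoot A := by
        rw [hTdef]
        have : ∑ i, ∑ j, A i j = n * perronRoot A := by
          rw [Finset.sum_congr rfl fun i _ => hr i]
          simp [Finset.sum_const, Finset.card_univ, nsmul_eq_mul]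
        rw [this, mul_comm, mul_div_assoc, div_self (ne_of_gt hn'), mul_one]
      rw [hLHS]
      refine le_antisymm ?_ ?_
      · exact le_csSup hbdd ⟨A, hAmem, hPB A hAmem⟩
      · refine Real.sSup_le (fun x hx => ?_) (le_of_lt hPApos)
        obtain ⟨B, hB, rfl⟩ := hx
        exact le_of_eq (hPB B hB)
    · -- all rows constant
      choose c hc using h2
      have hcpos : ∀ i, 0 < c i := fun i => hc i ⟨0, hn⟩ ▸ hA i ⟨0, hn⟩
      set s0 : ℝ := ∑ i, c i with hs0
      have hs0pos : 0 < s0 := Finset.sum_pos (fun i _ => hcpos i) univ_nonempty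
      have hOsingle : ∀ B ∈ Omega A, B = A := by
        intro B hB
        ext i j
        obtain ⟨φ, hφ⟩ := hB i
        rw [hφ j, hc i (φ j), hc i j]
      have hcne : c ≠ 0 := by
        intro h0
        have := hcpos ⟨0, hn⟩
        rw [h0] at this
        exact lt_irrefl 0 this
      have hmemb : A.mulVec c = s0 • c := by
        funext i
        show ∑ j, A i j * c j = s0 * c i
        calc ∑ j, A i j * c j = ∑ j, c i * c j := by
              exact Finset.sum_congr rfl fun j _ => by rw [hc i j]
          _ = c i * s0 := by rw [← Finset.mul_sum]
          _ = s0 * c i := by ring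
      have hup : ∀ x ∈ {r : ℝ | 0 ≤ r ∧ ∃ v : Fin n → ℝ, v ≠ 0 ∧ A.mulVec v = r • v},
          x ≤ s0 := by
        rintro x ⟨hx0, v, hv, he⟩
        rcases eq_or_lt_of_le hx0 with h | hxpos
        · rw [← h]; exact le_of_lt hs0pos
        have hev : ∀ i, x * v i = c i * ∑ j, v j := by
          intro i
          have := congrFun he i
          calc x * v i = (A.mulVec v) i := by
                rw [he]; rfl
            _ = ∑ j, A i j * v j := by simp [Matrix.mulVec, dotProduct]
            _ = ∑ j, c i * v j := Finset.sum_congr rfl fun j _ => by rw [hc i j]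
            _ = c i * ∑ j, v j := by rw [← Finset.mul_sum]
        set V : ℝ := ∑ j, v j with hV
        have hVne : V ≠ 0 := by
          intro hV0
          apply hv
          funext i
          have := hev i
          rw [hV0, mul_zero] at this
          exact (mul_eq_zero.mp this).resolve_left (ne_of_gt hxpos)
        have hsum : x * V = s0 * V := by
          calc x * V = ∑ i, x * v i := by rw [Finset.mul_sum]
            _ = ∑ i, c i * V := Finset.sum_congr rfl fun i _ => hev i
            _ = s0 * V := by rw [← Finset.sum_mul]
        have : x = s0 := by
          have := mul_right_cancel₀ hVne hsum
          exact this
        exact le_of_eq this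
      have hPA : perronRoot A = s0 := by
        refine le_antisymm (Real.sSup_le hup (le_of_lt hs0pos)) ?_
        exact le_csSup ⟨s0, hup⟩ ⟨le_of_lt hs0pos, c, hcne, hmemb⟩
      have hLHS : T / n = s0 := by
        rw [hTdef]
        have : ∑ i, ∑ j, A i j = n * s0 := by
          rw [hs0, Finset.mul_sum]
          refine Finset.sum_congr rfl fun i _ => ?_
          rw [Finset.sum_congr rfl fun j (_ : j ∈ univ) => hc i j]
          simp [Finset.sum_const, Finset.card_univ, nsmul_eq_mul]
        rw [this, mul_comm, mul_div_assoc, div_self (ne_of_gt hn'), mul_one]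
      rw [hLHS, ← hPA]
      refine le_antisymm ?_ ?_
      · exact le_csSup hbdd ⟨A, hAmem, rfl⟩
      · refine Real.sSup_le (fun x hx => ?_) ?_
        · obtain ⟨B, hB, rfl⟩ := hx
          rw [hOsingle B hB]
        · rw [hPA]; exact le_of_lt hs0pos
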